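/- Let n ≥ 2, p_1 ≥ p_2 ≥ ... ≥ p_n > 0, δ̄ > 0, and fix j ∈ {1,...,n-1}. Define P = ∑_{i=1}^n p_i^{2/3} and Q_j = (P - p_j^{2/3})/p_n^{2/3}. For δ_j ∈ (0, nδ̄/(Q_j+1)], the function H(δ_j) = p_j/δ_j + (P - p_j^{2/3})^{3/2} / √((nδ̄ - δ_j)δ_j) is strictly decreasing, i.e., its derivative H'(δ_j) = -p_j δ_j^{-2} - (1/2)(P - p_j^{2/3})^{3/2}[(nδ̄ - δ_j)δ_j]^{-3/2}(nδ̄ - 2δ_j) is negative on this interval. -/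
import Mathlib


open Finset Real

theorem stmt_4 (n : ℕ) (hn : 2 ≤ n) (p : Fin n → ℝ) (dbar : ℝ)
    (hp : ∀ i, 0 < p i) (hmono : ∀ i j : Fin n, i ≤ j → p j ≤ p i)
    (hd : 0 < dbar) (j : Fin n) (hj : (j : ℕ) < n - 1)
    (P Q : ℝ) (hP : P = ∑ i, (p i) ^ ((2:ℝ)/3))
    (hQ : Q = (P - (p j) ^ ((2:ℝ)/3)) / (p ⟨n-1, by omega⟩) ^ ((2:ℝ)/3)) :
    StrictAntiOn
      (fun δ : ℝ => p j / δ +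
        (P - (p j) ^ ((2:ℝ)/3)) ^ ((3:ℝ)/2) / Real.sqrt ((n * dbar - δ) * δ))
      (Set.Ioc 0 (n * dbar / (Q + 1))) ∧
    ∀ δ ∈ Set.Ioc (0:ℝ) (n * dbar / (Q + 1)),
      -(p j) * δ ^ (-(2:ℝ))
        - (1/2) * (P - (p j) ^ ((2:ℝ)/3)) ^ ((3:ℝ)/2)
            * ((n * dbar - δ) * δ) ^ (-(3:ℝ)/2) * (n * dbar - 2 * δ) < 0 := by
  set k : Fin n := ⟨n-1, by omega⟩ with hk
  have hpn : (0:ℝ) < (p k) ^ ((2:ℝ)/3) := Real.rpow_pos_of_pos (hp k) _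
  -- A := P - p j ^ (2/3)
  set A : ℝ := P - (p j) ^ ((2:ℝ)/3) with hA
  have hjk : k ≠ j := by
    intro h
    have : (k : ℕ) = (j : ℕ) := by rw [h]
    simp [hk] at this
    omega
  have hAge : (p k) ^ ((2:ℝ)/3) ≤ A := by
    have hsum : A = ∑ i ∈ univ.erase j, (p i) ^ ((2:ℝ)/3) := by
      rw [hA, hP, ← Finset.sum_erase_add univ _ (Finset.mem_univ j)]
      ring
    rw [hsum]
    exact Finset.single_le_sum (fun i _ => (Real.rpow_pos_of_pos (hp i) _).le)
      (Finset.mem_erase.mpr ⟨hjk, Finset.mem_univ k⟩)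
  have hApos : (0:ℝ) < A := lt_of_lt_of_le hpn hAge
  have hQ1 : (1:ℝ) ≤ Q := by
    rw [hQ]
    rw [le_div_iff₀ hpn]
    simpa using hAge
  have hnd : (0:ℝ) < n * dbar := by
    have : (0:ℝ) < (n:ℝ) := by positivity
    positivity
  have hub : n * dbar / (Q + 1) ≤ n * dbar / 2 := by
    apply div_le_div_of_nonneg_left hnd.le (by norm_num)
    linarith
  have key : ∀ δ ∈ Set.Ioc (0:ℝ) (n * dbar / (Q + 1)),
      0 < δ ∧ δ ≤ n * dbar / 2 := by
    intro δ hδ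
    exact ⟨hδ.1, le_trans hδ.2 hub⟩
  constructor
  · intro x hx y hy hxy
    obtain ⟨hx0, hx2⟩ := key x hx
    obtain ⟨hy0, hy2⟩ := key y hy
    have hgx : (0:ℝ) < (n * dbar - x) * x := by
      apply mul_pos _ hx0
      nlinarith
    have hgy : (0:ℝ) < (n * dbar - y) * y := by
      apply mul_pos _ hy0
      nlinarith
    have hgxy : (n * dbar - x) * x < (n * dbar - y) * y := by nlinarith
    have h1 : p j / y < p j / x := div_lt_div_of_pos_left (hp j) hx0 hxy
    have h2 : A ^ ((3:ℝ)/2) / Real.sqrt ((n * dbar - y) * y)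
        < A ^ ((3:ℝ)/2) / Real.sqrt ((n * dbar - x) * x) := by
      apply div_lt_div_of_pos_left (Real.rpow_pos_of_pos hApos _)
        (Real.sqrt_pos.mpr hgx)
      exact Real.sqrt_lt_sqrt hgx.le hgxy
    simpa using add_lt_add h1 h2
  · intro δ hδ
    obtain ⟨h0, h2⟩ := key δ hδ
    have hgd : (0:ℝ) < (n * dbar - δ) * δ := by
      apply mul_pos _ h0
      nlinarith
    have t1 : (0:ℝ) < p j * δ ^ (-(2:ℝ)) :=
      mul_pos (hp j) (Real.rpow_pos_of_pos h0 _)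
    have t2 : (0:ℝ) ≤ (1/2) * A ^ ((3:ℝ)/2) * ((n * dbar - δ) * δ) ^ (-(3:ℝ)/2)
        * (n * dbar - 2 * δ) := by
      have := Real.rpow_pos_of_pos hApos ((3:ℝ)/2)
      have := Real.rpow_pos_of_pos hgd (-(3:ℝ)/2)
      have : n * dbar - 2 * δ ≥ 0 := by linarith
      positivity
    linarith
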